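/- For each t = 0,…,T−1, the functions H*_t and V*_t are K_t-convex. -/

import Mathlib

open MeasureTheory Filter Set

/-- A function `g : ℝ → ℝ` is `K`-convex if for all `x ≤ y ≤ z` with
`y = τ·x + (1-τ)·z`, `0 ≤ τ ≤ 1`, one has `g y ≤ τ·g x + (1-τ)·(g z + K)`. -/
def KConvex (K : ℝ) (g : ℝ → ℝ) : Prop :=
  ∀ x y z τ : ℝ, 0 ≤ τ → τ ≤ 1 → x ≤ y → y ≤ z → y = τ * x + (1 - τ) * z →
    g y ≤ τ * g x + (1 - τ) * (g z + K)

lemma exists_combo {a u b : ℝ} (h1 : a ≤ u) (h2 : u ≤ b) :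
    ∃ σ : ℝ, 0 ≤ σ ∧ σ ≤ 1 ∧ u = σ * a + (1 - σ) * b := by
  rcases eq_or_lt_of_le (h1.trans h2) with h | h
  · exact ⟨0, le_refl _, zero_le_one, by nlinarith [le_antisymm h2 (h ▸ h1)]⟩
  · have hba : (0:ℝ) < b - a := by linarith
    refine ⟨(b - u) / (b - a), by apply div_nonneg <;> linarith, ?_, ?_⟩
    · rw [div_le_one hba]; linarith
    · field_simp; ring

lemma KConvex.combo {K : ℝ} {g : ℝ → ℝ} (hg : KConvex K g) {a u b : ℝ}
    (h1 : a ≤ u) (h2 : u ≤ b) :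
    ∃ σ : ℝ, 0 ≤ σ ∧ σ ≤ 1 ∧ u = σ * a + (1 - σ) * b ∧
      g u ≤ σ * g a + (1 - σ) * (g b + K) := by
  obtain ⟨σ, h0, h1', he⟩ := exists_combo h1 h2
  exact ⟨σ, h0, h1', he, hg a u b σ h0 h1' h1 h2 he⟩

lemma KConvex.mono {K K' : ℝ} {g : ℝ → ℝ} (hg : KConvex K g) (h : K ≤ K') :
    KConvex K' g := by
  intro x y z τ h0 h1 hxy hyz he
  have := hg x y z τ h0 h1 hxy hyz he
  nlinarith

lemma KConvex.add {K₁ K₂ : ℝ} {g₁ g₂ : ℝ → ℝ} (h1 : KConvex K₁ g₁) (h2 : KConvex K₂ g₂) :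
    KConvex (K₁ + K₂) (fun x => g₁ x + g₂ x) := by
  intro x y z τ h0 h1' hxy hyz he
  have a1 := h1 x y z τ h0 h1' hxy hyz he
  have a2 := h2 x y z τ h0 h1' hxy hyz he
  simp only; nlinarith

lemma KConvex.const_mul {K : ℝ} {g : ℝ → ℝ} (hg : KConvex K g) {a : ℝ} (ha : 0 ≤ a) :
    KConvex (a * K) (fun x => a * g x) := by
  intro x y z τ h0 h1 hxy hyz he
  have := hg x y z τ h0 h1 hxy hyz he
  simp only; nlinarith

lemma ConvexOn.kConvex {g : ℝ → ℝ} (hg : ConvexOn ℝ Set.univ g) : KConvex 0 g := by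
  intro x y z τ h0 h1 hxy hyz he
  have := hg.2 (mem_univ x) (mem_univ z) h0 (by linarith : (0:ℝ) ≤ 1 - τ) (by ring)
  simp only [smul_eq_mul] at this
  rw [he]
  nlinarith

lemma kConvex_const {K c : ℝ} (hK : 0 ≤ K) : KConvex K (fun _ => c) := by
  intro x y z τ h0 h1 _ _ _
  simp only; nlinarith

section Scarf
variable {K : ℝ} {H : ℝ → ℝ} {S : ℝ}

lemma scarf_dc (hK : 0 ≤ K) (hH : KConvex K H) (hS : ∀ u, H S ≤ H u)
    {x' x : ℝ} (hx' : x' ≤ x) (hxS : x ≤ S) (hx : K + H S < H x) : K + H S < H x' := by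
  by_contra hcon
  push_neg at hcon
  obtain ⟨σ, h0, h1, _, hle⟩ := hH.combo hx' hxS
  nlinarith

lemma scarf_kconvex (hK : 0 ≤ K) (hH : KConvex K H) (hS : ∀ u, H S ≤ H u) :
    KConvex K (fun x => min (H x) (K + H (max x S))) := by
  set W := fun x => min (H x) (K + H (max x S)) with hW
  have hWlb : ∀ x, H S ≤ W x := fun x => le_min (hS x) (by linarith [hS (max x S)])
  have hWB : ∀ x, x ≤ S → K + H S < H x → W x = K + H S := by
    intro x h1 h2; rw [hW]; simp only
    rw [max_eq_right h1, min_eq_right (le_of_lt h2)]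
  have hWnB : ∀ x, ¬(x ≤ S ∧ K + H S < H x) → W x = H x := by
    intro x h; push_neg at h
    rcases le_total x S with h1 | h1
    · rw [hW]; simp only; rw [max_eq_right h1]; exact min_eq_left (h h1)
    · rw [hW]; simp only; rw [max_eq_left h1]
      exact min_eq_left (by linarith [hS x])
  intro x y z τ h0 h1 hxy hyz he
  by_cases hyB : y ≤ S ∧ K + H S < H y
  · have hxB : x ≤ S ∧ K + H S < H x :=
      ⟨hxy.trans hyB.1, scarf_dc hK hH hS hxy hyB.1 hyB.2⟩
    rw [hWB y hyB.1 hyB.2, hWB x hxB.1 hxB.2]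
    have := hWlb z
    nlinarith
  · rw [hWnB y hyB]
    have hzB : ¬(z ≤ S ∧ K + H S < H z) := by
      intro hz; exact hyB ⟨hyz.trans hz.1, scarf_dc hK hH hS hyz hz.1 hz.2⟩
    rw [hWnB z hzB]
    by_cases hxB : x ≤ S ∧ K + H S < H x
    · rw [hWB x hxB.1 hxB.2]
      rcases le_total y S with hyS | hyS
      · push_neg at hyB
        have h2 := hyB hyS
        have := hS z
        nlinarith
      · rcases eq_or_lt_of_le (hyS.trans hyz) with hzS | hzS
        · -- z = S, hence y = S
          have hys : y = S := le_antisymm (hyz.trans hzS.symm.le) hyS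
          rw [hys, ← hzS]
          nlinarith [hS z, hS S]
        · -- S < z
          have hzy : z - y = τ * (z - x) := by linear_combination -he
          set σ := (z - y) / (z - S) with hσ
          have hzS' : (0:ℝ) < z - S := by linarith
          have hσ0 : 0 ≤ σ := div_nonneg (by linarith) hzS'.le
          have hσ1 : σ ≤ 1 := by rw [hσ, div_le_one hzS']; linarith
          have hye : y = σ * S + (1 - σ) * z := by
            rw [hσ]; field_simp; ring
          have hτσ : τ ≤ σ := by
            rw [hσ, hzy, le_div_iff₀ hzS']
            nlinarith [hxB.1]
          have hle := hH S y z σ hσ0 hσ1 hyS hyz hye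
          nlinarith [hS z]
    · rw [hWnB x hxB]; exact hH x y z τ h0 h1 hxy hyz he

lemma scarf_V_eq (hK : 0 ≤ K) (hH : KConvex K H) (hS : ∀ u, H S ≤ H u) (x : ℝ) :
    sInf ((fun y => K * (if x < y then (1:ℝ) else 0) + H y) '' Set.Ici x)
      = min (H x) (K + H (max x S)) := by
  set f := fun y => K * (if x < y then (1:ℝ) else 0) + H y with hf
  have hfx : f x = H x := by simp [hf]
  have hub : ∀ y ∈ Ici x, min (H x) (K + H (max x S)) ≤ f y := by
    intro y hy
    rcases eq_or_lt_of_le (mem_Ici.mp hy : x ≤ y) with h | h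
    · rw [← h, hfx]; exact min_le_left _ _
    · have hfy : f y = K + H y := by simp [hf, if_pos h]
      rw [hfy]
      rcases le_total x S with h1 | h1
      · refine (min_le_right _ _).trans ?_
        rw [max_eq_right h1]
        linarith [hS y]
      · refine (min_le_left _ _).trans ?_
        obtain ⟨σ, h0, h1', _, hle⟩ := hH.combo h1 h.le
        nlinarith [hS y]
  have hne : (f '' Ici x).Nonempty := ⟨f x, mem_image_of_mem f self_mem_Ici⟩
  have hbdd : BddBelow (f '' Ici x) := by
    refine ⟨min (H x) (K + H (max x S)), ?_⟩
    rintro v ⟨y, hy, rfl⟩; exact hub y hy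
  apply le_antisymm
  · apply le_min
    · exact csInf_le hbdd ⟨x, self_mem_Ici, hfx⟩
    · rcases lt_or_ge x S with h1 | h1
      · rw [max_eq_right h1.le]
        have : f S = K + H S := by simp [hf, if_pos h1]
        exact csInf_le hbdd ⟨S, mem_Ici.2 h1.le, this⟩
      · rw [max_eq_left h1]
        refine (csInf_le hbdd ⟨x, self_mem_Ici, hfx⟩).trans (by linarith)
  · exact le_csInf hne (by rintro v ⟨y, hy, rfl⟩; exact hub y hy)

lemma scarf_W_lb (hK : 0 ≤ K) (hS : ∀ u, H S ≤ H u) (x : ℝ) :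
    H S ≤ min (H x) (K + H (max x S)) :=
  le_min (hS x) (by linarith [hS (max x S)])

lemma scarf_W_ub (hK : 0 ≤ K) (hH : KConvex K H) (hS : ∀ u, H S ≤ H u) (c : ℝ) :
    ∀ x ≤ c, min (H x) (K + H (max x S)) ≤ K + K + max (H S) (H c) := by
  intro x hx
  refine (min_le_right _ _).trans ?_
  rcases le_total c S with hcS | hcS
  · rw [max_eq_right (hx.trans hcS)]
    have := le_max_left (H S) (H c); linarith
  · have hu1 : S ≤ max x S := le_max_right _ _
    have hu2 : max x S ≤ c := max_le hx hcS
    obtain ⟨σ, h0, h1, _, hle⟩ := hH.combo hu1 hu2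
    have h2 := le_max_left (H S) (H c)
    have h3 := le_max_right (H S) (H c)
    nlinarith

end Scarf

lemma integral_step
    (μ : Measure ℝ) [IsProbabilityMeasure μ] (hpos : μ (Set.Iio 0) = 0)
    (Vp : ℝ → ℝ) (hVc : Continuous Vp)
    (L : ℝ) (hL : ∀ x, L ≤ Vp x)
    (hU : ∀ c, ∃ M, ∀ x ≤ c, Vp x ≤ M)
    (κ : ℝ) (hVk : KConvex κ Vp) :
    Continuous (fun y => ∫ ξ, Vp (y - ξ) ∂μ) ∧
    KConvex κ (fun y => ∫ ξ, Vp (y - ξ) ∂μ) ∧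
    (∀ y, L ≤ ∫ ξ, Vp (y - ξ) ∂μ) ∧
    (∀ c, ∃ M, ∀ y ≤ c, (∫ ξ, Vp (y - ξ) ∂μ) ≤ M) := by
  have hae : ∀ᵐ ξ ∂μ, 0 ≤ ξ := by
    rw [ae_iff]
    have : {a : ℝ | ¬ 0 ≤ a} = Set.Iio 0 := by ext a; simp [not_le]
    rw [this]; exact hpos
  have hmeas : ∀ y : ℝ, AEStronglyMeasurable (fun ξ => Vp (y - ξ)) μ := fun y =>
    (hVc.comp (continuous_const.sub continuous_id)).aestronglyMeasurable
  have hint : ∀ y : ℝ, Integrable (fun ξ => Vp (y - ξ)) μ := by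
    intro y
    obtain ⟨M, hM⟩ := hU y
    refine Integrable.mono' (integrable_const (max |L| |M|)) (hmeas y) ?_
    filter_upwards [hae] with ξ hξ
    rw [Real.norm_eq_abs, abs_le]
    constructor
    · have := hL (y - ξ)
      have h2 := neg_abs_le L
      have h3 := le_max_left |L| |M|
      linarith
    · have := hM (y - ξ) (by linarith)
      have h2 := le_abs_self M
      have h3 := le_max_right |L| |M|
      linarith
  refine ⟨?_, ?_, ?_, ?_⟩
  · rw [continuous_iff_continuousAt]
    intro y₀
    obtain ⟨M, hM⟩ := hU (y₀ + 1)
    apply continuousAt_of_dominated (bound := fun _ => max |L| |M|)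
    · exact Eventually.of_forall (fun y => hmeas y)
    · have hev : ∀ᶠ y in nhds y₀, y < y₀ + 1 :=
        eventually_of_mem (IsOpen.mem_nhds isOpen_Iio (by simp [Set.mem_Iio])) (fun y hy => hy)
      filter_upwards [hev] with y hy
      filter_upwards [hae] with ξ hξ
      rw [Real.norm_eq_abs, abs_le]
      constructor
      · have := hL (y - ξ)
        have h2 := neg_abs_le L
        have h3 := le_max_left |L| |M|
        linarith
      · have := hM (y - ξ) (by linarith)
        have h2 := le_abs_self M
        have h3 := le_max_right |L| |M|
        linarith
    · exact integrable_const _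
    · exact Eventually.of_forall fun ξ =>
        (hVc.comp (continuous_id.sub continuous_const)).continuousAt
  · intro x y z τ h0 h1 hxy hyz he
    have hpt : ∀ ξ : ℝ, Vp (y - ξ) ≤ τ * Vp (x - ξ) + (1 - τ) * (Vp (z - ξ) + κ) := fun ξ =>
      hVk (x - ξ) (y - ξ) (z - ξ) τ h0 h1 (by linarith) (by linarith)
        (by linear_combination he)
    have ha : Integrable (fun ξ => Vp (z - ξ) + κ) μ := (hint z).add (integrable_const κ)
    have hb : Integrable (fun ξ => τ * Vp (x - ξ)) μ := (hint x).const_mul τ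
    have hc : Integrable (fun ξ => (1 - τ) * (Vp (z - ξ) + κ)) μ := ha.const_mul (1 - τ)
    have hmono := integral_mono (hint y) (hb.add hc) hpt
    simp only [Pi.add_apply] at hmono
    rw [integral_add hb hc, integral_const_mul, integral_const_mul,
      integral_add (hint z) (integrable_const κ), integral_const] at hmono
    simpa [measure_univ] using hmono
  · intro y
    have := integral_mono (integrable_const L) (hint y) (fun ξ => hL _)
    simpa [integral_const, measure_univ] using this
  · intro c
    obtain ⟨M, hM⟩ := hU c
    refine ⟨M, fun y hy => ?_⟩
    have := integral_mono_ae (hint y) (integrable_const M)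
      (by filter_upwards [hae] with ξ hξ; exact hM _ (by linarith))
    simpa [integral_const, measure_univ] using this

theorem stmt0
    (T : ℕ) (hT : 2 ≤ T)
    (α : ℝ) (hα0 : 0 < α) (hα1 : α ≤ 1)
    (K : ℕ → ℝ) (hK0 : ∀ t, t < T → 0 ≤ K t)
    (hKmono : ∀ t, t + 2 ≤ T → α * K (t + 1) ≤ K t)
    (ν : ℕ → MeasureTheory.Measure ℝ)
    (hprob : ∀ t, MeasureTheory.IsProbabilityMeasure (ν t))
    (hpos : ∀ t, ν t (Set.Iio 0) = 0)
    (F : ℕ → ℝ → ℝ) (hF : ∀ t x, F t x = (ν t (Set.Iic x)).toReal)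
    (C : ℕ → ℝ → ℝ)
    (hCconv : ∀ t, t < T → ConvexOn ℝ Set.univ (C t))
    (hCcoer : ∀ t, t < T → Filter.Tendsto (C t) (Filter.cocompact ℝ) Filter.atTop)
    (Hstar Vstar : ℕ → ℝ → ℝ)
    (hVstarT : ∀ x, Vstar T x = 0)
    (hHstar : ∀ t, t < T → ∀ y,
      Hstar t y = C t y + α * ∫ ξ, Vstar (t + 1) (y - ξ) ∂(ν t))
    (hVstar : ∀ t, t < T → ∀ x,
      Vstar t x = sInf ((fun y => K t * (if x < y then (1 : ℝ) else 0) + Hstar t y) '' Set.Ici x))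
    :
    ∀ t, t < T → KConvex (K t) (Hstar t) ∧ KConvex (K t) (Vstar t) := by
  set κ : ℕ → ℝ := fun t => if t = T then 0 else K t with hκdef
  have main : ∀ d t, t + d = T →
      (Continuous (Vstar t) ∧ KConvex (κ t) (Vstar t) ∧ 0 ≤ κ t ∧
       (∃ L, ∀ x, L ≤ Vstar t x) ∧ (∀ c, ∃ M, ∀ x ≤ c, Vstar t x ≤ M)) ∧
      (t < T → KConvex (K t) (Hstar t)) := by
    intro d
    induction d with
    | zero =>
      intro t ht
      have htt : t = T := by omega
      subst htt
      have hV0 : Vstar t = fun _ => (0:ℝ) := funext hVstarT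
      have hκ0 : κ t = 0 := if_pos rfl
      refine ⟨⟨?_, ?_, ?_, ⟨0, ?_⟩, fun c => ⟨0, ?_⟩⟩, fun h => absurd h (lt_irrefl t)⟩
      · rw [hV0]; exact continuous_const
      · rw [hV0, hκ0]; exact kConvex_const le_rfl
      · rw [hκ0]
      · intro x; rw [hV0]
      · intro x _; rw [hV0]
    | succ d ih =>
      intro t ht
      have htT : t < T := by omega
      obtain ⟨⟨hVc, hVk, hκ1, ⟨L, hL⟩, hU⟩, -⟩ := ih (t + 1) (by omega)
      haveI := hprob t
      obtain ⟨hGc, hGk, hGlb, hGub⟩ :=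
        integral_step (ν t) (hpos t) (Vstar (t + 1)) hVc L hL hU _ hVk
      set G := fun y => ∫ ξ, Vstar (t + 1) (y - ξ) ∂(ν t) with hG
      have hHeq : Hstar t = fun y => C t y + α * G y := funext (fun y => hHstar t htT y)
      have hCc : Continuous (C t) := by
        rw [← continuousOn_univ]
        exact ConvexOn.continuousOn isOpen_univ (hCconv t htT)
      have hHc : Continuous (Hstar t) := by
        rw [hHeq]; exact hCc.add (continuous_const.mul hGc)
      have hHk : KConvex (K t) (Hstar t) := by
        have h1 : KConvex 0 (C t) := (hCconv t htT).kConvex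
        have h2 : KConvex (α * κ (t + 1)) (fun y => α * G y) := hGk.const_mul hα0.le
        have h3 := h1.add h2
        rw [hHeq]
        refine KConvex.mono (by simpa using h3) ?_
        by_cases hT1 : t + 1 = T
        · simp only [hκdef, if_pos hT1, mul_zero]
          exact hK0 t htT
        · simp only [hκdef, if_neg hT1]
          exact hKmono t (by omega)
      have hHco : Tendsto (Hstar t) (cocompact ℝ) atTop := by
        rw [hHeq]
        apply tendsto_atTop_mono ?_
          (tendsto_atTop_add_const_right _ (α * L) (hCcoer t htT))
        intro y
        have := hGlb y
        nlinarith
      obtain ⟨S, hS⟩ := hHc.exists_forall_le hHco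
      have hK0' := hK0 t htT
      have hVeq : Vstar t = fun x => min (Hstar t x) (K t + Hstar t (max x S)) := by
        funext x
        rw [hVstar t htT x, scarf_V_eq hK0' hHk hS x]
      have hκt : κ t = K t := if_neg (by omega)
      refine ⟨⟨?_, ?_, ?_, ⟨Hstar t S, ?_⟩, ?_⟩, fun _ => hHk⟩
      · rw [hVeq]
        exact hHc.min (continuous_const.add (hHc.comp (continuous_id.max continuous_const)))
      · rw [hκt, hVeq]; exact scarf_kconvex hK0' hHk hS
      · rw [hκt]; exact hK0'
      · intro x; rw [hVeq]; exact scarf_W_lb hK0' hS x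
      · intro c
        refine ⟨K t + K t + max (Hstar t S) (Hstar t c), fun x hx => ?_⟩
        rw [hVeq]
        exact scarf_W_ub hK0' hHk hS c x hx
  intro t htT
  obtain ⟨⟨-, hVk, -, -, -⟩, hHk⟩ := main (T - t) t (by omega)
  have hκt : κ t = K t := if_neg (by omega)
  exact ⟨hHk htT, hκt ▸ hVk⟩
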